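/- Let θ : ℝ → ℝ be defined by θ(t) = e^{−1/t} for t > 0 and θ(t) = 0 for t ≤ 0. Then θ is C^∞, and for every real μ ≥ 1 and every integer n ≥ 1, sup{ |(θ^μ)^{(k)}(t)| : t ∈ [0,1], 0 ≤ k ≤ n } ≤ n^{3n}, where θ^μ(t) := θ(t)^μ (equal to e^{−μ/t} for t > 0 and 0 for t ≤ 0). -/

import Mathlib

open Real Set

/-- `θ(t) = e^{-1/t}` for `t > 0`, `θ(t) = 0` for `t ≤ 0`. -/
noncomputable def theta (t : ℝ) : ℝ := if 0 < t then Real.exp (-1 / t) else 0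

open Polynomial

noncomputable def Qp : ℕ → Polynomial ℝ
  | 0 => 1
  | (k+1) => X ^ 2 * (Qp k - derivative (Qp k))

lemma iteratedDeriv_eng (k : ℕ) :
    iteratedDeriv k expNegInvGlue = fun x => (Qp k).eval x⁻¹ * expNegInvGlue x := by
  induction k with
  | zero => simp [Qp, iteratedDeriv_zero]
  | succ k ih =>
    rw [iteratedDeriv_succ, ih]
    funext x
    exact (expNegInvGlue.hasDerivAt_polynomial_eval_inv_mul (Qp k) x).deriv

lemma natDegree_Qp (k : ℕ) : (Qp k).natDegree ≤ 2 * k := by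
  induction k with
  | zero => simp [Qp]
  | succ k ih =>
    have h1 : (Qp (k+1)).natDegree ≤ (X ^ 2 : ℝ[X]).natDegree
        + (Qp k - derivative (Qp k)).natDegree := natDegree_mul_le
    have h2 : (Qp k - derivative (Qp k)).natDegree ≤ 2 * k := by
      refine (natDegree_sub_le _ _).trans ?_
      have := (natDegree_derivative_le (Qp k)).trans (Nat.sub_le _ _)
      exact sup_le ih (this.trans ih)
    rw [natDegree_X_pow] at h1
    omega

noncomputable def Sc (k : ℕ) : ℝ := ∑ i ∈ Finset.range (2*k+1), |(Qp k).coeff i|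

lemma Sc_nonneg (k : ℕ) : 0 ≤ Sc k :=
  Finset.sum_nonneg fun _ _ => abs_nonneg _

lemma Sc_succ_le (k : ℕ) : Sc (k+1) ≤ (2*k+2) * Sc k := by
  have hp : Qp (k+1) = (Qp k - derivative (Qp k)) * X ^ 2 := by
    rw [Qp]; ring
  have hc : ∀ i, (Qp (k+1)).coeff i
      = if 2 ≤ i then (Qp k - derivative (Qp k)).coeff (i-2) else 0 := by
    intro i; rw [hp, coeff_mul_X_pow']
  have e0 : Sc (k+1) = ∑ j ∈ Finset.range (2*k+1), |(Qp (k+1)).coeff (j+2)| := by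
    rw [Sc, show 2*(k+1)+1 = (2*k+2)+1 from by ring, Finset.sum_range_succ',
      show 2*k+2 = (2*k+1)+1 from by ring, Finset.sum_range_succ']
    simp [hc]
  rw [e0]
  have hterm : ∀ j ∈ Finset.range (2*k+1), |(Qp (k+1)).coeff (j+2)|
      ≤ |(Qp k).coeff j| + (2*k+1) * |(Qp k).coeff (j+1)| := by
    intro j hj
    rw [hc, if_pos (by omega), show j+2-2 = j from by omega, coeff_sub, coeff_derivative]
    refine (abs_sub _ _).trans ?_
    gcongr
    rw [abs_mul]
    have hj' : (j:ℝ) + 1 ≤ 2*k+1 := by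
      have h := Finset.mem_range.1 hj
      have : j + 1 ≤ 2*k+1 := by omega
      exact_mod_cast this
    calc |(Qp k).coeff (j+1)| * |(j:ℝ)+1| ≤ |(Qp k).coeff (j+1)| * (2*k+1) := by
          rw [abs_of_nonneg (by positivity : (0:ℝ) ≤ (j:ℝ)+1)]
          exact mul_le_mul_of_nonneg_left hj' (abs_nonneg _)
      _ = (2*k+1) * |(Qp k).coeff (j+1)| := mul_comm _ _
  refine (Finset.sum_le_sum hterm).trans ?_
  rw [Finset.sum_add_distrib, ← Finset.mul_sum]
  have h1 : ∑ j ∈ Finset.range (2*k+1), |(Qp k).coeff j| = Sc k := rfl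
  have h2 : ∑ j ∈ Finset.range (2*k+1), |(Qp k).coeff (j+1)| ≤ Sc k := by
    have := Finset.sum_range_succ' (fun i => |(Qp k).coeff i|) (2*k+1)
    have hz : (Qp k).coeff (2*k+1) = 0 :=
      coeff_eq_zero_of_natDegree_lt (by have := natDegree_Qp k; omega)
    have hS : ∑ i ∈ Finset.range (2*k+2), |(Qp k).coeff i| = Sc k + |(Qp k).coeff (2*k+1)| := by
      rw [show 2*k+2 = (2*k+1)+1 from rfl, Finset.sum_range_succ]; rfl
    rw [hz, abs_zero, add_zero] at hS
    rw [show 2*k+2 = (2*k+1)+1 from rfl] at this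
    nlinarith [abs_nonneg ((Qp k).coeff 0)]
  rw [h1]
  nlinarith [Sc_nonneg k]

lemma Sc_le (k : ℕ) : Sc k ≤ 2^k * (Nat.factorial k : ℝ) := by
  induction k with
  | zero => simp [Sc, Qp]
  | succ k ih =>
    refine (Sc_succ_le k).trans ?_
    have h : ((2:ℝ)*k+2) * (2^k * (Nat.factorial k : ℝ))
        = 2^(k+1) * (Nat.factorial (k+1) : ℝ) := by
      rw [Nat.factorial_succ]; push_cast; ring
    calc (2*(k:ℝ)+2) * Sc k ≤ (2*(k:ℝ)+2) * (2^k * (Nat.factorial k : ℝ)) := by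
          exact mul_le_mul_of_nonneg_left ih (by positivity)
      _ = _ := h

lemma eval_Qp_le (k : ℕ) {x : ℝ} (hx : 1 ≤ x) : |(Qp k).eval x| ≤ Sc k * x^(2*k) := by
  rw [eval_eq_sum_range' (Nat.lt_succ_of_le (natDegree_Qp k))]
  refine (Finset.abs_sum_le_sum_abs _ _).trans ?_
  rw [Sc, Finset.sum_mul]
  refine Finset.sum_le_sum fun i hi => ?_
  rw [abs_mul, abs_pow, abs_of_nonneg (by linarith : (0:ℝ) ≤ x)]
  exact mul_le_mul_of_nonneg_left
    (pow_le_pow_right₀ hx (by have := Finset.mem_range.1 hi; omega)) (abs_nonneg _)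

lemma pow_mul_exp_le {x : ℝ} (hx : 0 < x) {m : ℕ} (hm : 1 ≤ m) :
    x ^ m * Real.exp (-x) ≤ (m:ℝ) ^ m * Real.exp (-(m:ℝ)) := by
  have hm0 : (0:ℝ) < m := by exact_mod_cast hm
  have hlog := Real.log_le_sub_one_of_pos (show 0 < x / m by positivity)
  rw [Real.log_div hx.ne' hm0.ne'] at hlog
  have h3 : (m:ℝ) * (x/m - 1) = x - m := by field_simp
  have h2 : (m:ℝ) * Real.log x - x ≤ (m:ℝ) * Real.log m - m := by
    have := mul_le_mul_of_nonneg_left hlog hm0.le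
    rw [mul_sub, h3] at this
    linarith [this]
  have key : ∀ y : ℝ, 0 < y → y ^ m * Real.exp (-y) = Real.exp ((m:ℝ) * Real.log y - y) := by
    intro y hy
    rw [Real.exp_sub, Real.exp_nat_mul, Real.exp_log hy, Real.exp_neg]
    ring
  rw [key x hx, key m hm0]
  exact Real.exp_le_exp.2 h2

lemma aux_ratio (k : ℕ) (hk : 1 ≤ k) :
    Real.exp 1 * (k:ℝ)^(k+1) ≤ ((k:ℝ)+1)^(k+1) := by
  have hk0 : (0:ℝ) < k := by exact_mod_cast hk
  have h := Real.log_le_sub_one_of_pos (show (0:ℝ) < k/(k+1) by positivity)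
  rw [Real.log_div hk0.ne' (by positivity : ((k:ℝ)+1) ≠ 0)] at h
  have hd : (k:ℝ)/(k+1) - 1 = -(1/((k:ℝ)+1)) := by field_simp; ring
  have hlog : (1:ℝ) ≤ ((k:ℝ)+1) * Real.log (((k:ℝ)+1)/k) := by
    rw [Real.log_div (by positivity) hk0.ne']
    rw [hd] at h
    have : 1/((k:ℝ)+1) ≤ Real.log ((k:ℝ)+1) - Real.log k := by linarith
    calc (1:ℝ) = ((k:ℝ)+1) * (1/((k:ℝ)+1)) := by field_simp
      _ ≤ _ := mul_le_mul_of_nonneg_left this (by positivity)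
  have hr : Real.exp 1 ≤ (((k:ℝ)+1)/k) ^ (k+1) := by
    have : Real.exp 1 ≤ Real.exp (((k:ℝ)+1) * Real.log (((k:ℝ)+1)/k)) :=
      Real.exp_le_exp.2 hlog
    rwa [show ((k:ℝ)+1) * Real.log (((k:ℝ)+1)/k) = ((k+1 : ℕ):ℝ) * Real.log (((k:ℝ)+1)/k)
        from by push_cast; ring,
      Real.exp_nat_mul, Real.exp_log (by positivity)] at this
  calc Real.exp 1 * (k:ℝ)^(k+1) ≤ (((k:ℝ)+1)/k) ^ (k+1) * (k:ℝ)^(k+1) :=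
        mul_le_mul_of_nonneg_right hr (by positivity)
    _ = ((k:ℝ)+1)^(k+1) := by rw [← mul_pow, div_mul_cancel₀ _ hk0.ne']

lemma factorial_le (k : ℕ) (hk : 1 ≤ k) :
    (Nat.factorial k : ℝ) ≤ Real.exp 1 * (k:ℝ)^(k+1) * Real.exp (-(k:ℝ)) := by
  induction k with
  | zero => omega
  | succ k ih =>
    rcases Nat.eq_or_lt_of_le hk with h1 | h1
    · simp only [← h1]
      norm_num [Nat.factorial]
      rw [← Real.exp_add]
      norm_num
    · have hk1 : 1 ≤ k := by omega
      have ih' := ih hk1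
      have hstep := aux_ratio k hk1
      have hexp : Real.exp (-(k:ℝ)) = Real.exp 1 * Real.exp (-((k:ℝ)+1)) := by
        rw [← Real.exp_add]; ring_nf
      have hfs : (Nat.factorial (k+1) : ℝ) = ((k:ℝ)+1) * (Nat.factorial k : ℝ) := by
        rw [Nat.factorial_succ]; push_cast; ring
      have hpos : (0:ℝ) < (k:ℝ)+1 := by positivity
      calc (Nat.factorial (k+1) : ℝ) = ((k:ℝ)+1) * (Nat.factorial k : ℝ) := hfs
        _ ≤ ((k:ℝ)+1) * (Real.exp 1 * (k:ℝ)^(k+1) * Real.exp (-(k:ℝ))) := by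
            exact mul_le_mul_of_nonneg_left ih' hpos.le
        _ ≤ ((k:ℝ)+1) * (((k:ℝ)+1)^(k+1) * Real.exp (-(k:ℝ))) :=
            mul_le_mul_of_nonneg_left
              (mul_le_mul_of_nonneg_right hstep (Real.exp_pos _).le |>.trans_eq (by ring))
              hpos.le
        _ = Real.exp 1 * ((k:ℝ)+1)^(k+2) * Real.exp (-((k:ℝ)+1)) := by
            rw [hexp]; ring
        _ = Real.exp 1 * (((k+1:ℕ)):ℝ)^(k+1+1) * Real.exp (-((k+1:ℕ):ℝ)) := by
            push_cast
            try ring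

lemma key8 (k : ℕ) (hk : 2 ≤ k) :
    Real.exp 1 * (k:ℝ) * 8^k ≤ Real.exp (3*(k:ℝ)) := by
  have he : (2.7182818283:ℝ) < Real.exp 1 := Real.exp_one_gt_d9
  have hepos : (0:ℝ) < Real.exp 1 := Real.exp_pos 1
  have e2 : (7.38:ℝ) ≤ Real.exp 1 ^ 2 := by nlinarith
  have e3 : (16:ℝ) ≤ Real.exp 1 ^ 3 := by nlinarith
  induction k with
  | zero => omega
  | succ k ih =>
    rcases Nat.eq_or_lt_of_le hk with h1 | h1
    · simp only [← h1]
      have h6 : Real.exp (3*((2:ℕ):ℝ)) = Real.exp 1 ^ 6 := by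
        rw [← Real.exp_nat_mul]; norm_num
      rw [h6]
      have e4 : (54.4:ℝ) ≤ Real.exp 1 ^ 4 := by nlinarith
      have e6 : (128:ℝ) * Real.exp 1 ≤ Real.exp 1 ^ 6 := by nlinarith
      push_cast
      nlinarith
    · have hk2 : 2 ≤ k := by omega
      have ih' := ih hk2
      have hkk : ((k:ℝ)+1) ≤ 2*(k:ℝ) := by
        have : (2:ℝ) ≤ (k:ℝ) := by exact_mod_cast hk2
        linarith
      have h3 : Real.exp 1 ^ 3 = Real.exp 3 := by
        rw [← Real.exp_nat_mul]; norm_num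
      have hexp3 : Real.exp (3*((k:ℝ)+1)) = Real.exp (3*(k:ℝ)) * Real.exp 1 ^ 3 := by
        rw [h3, ← Real.exp_add]; ring_nf
      have hexpos : (0:ℝ) < Real.exp (3*(k:ℝ)) := Real.exp_pos _
      push_cast
      calc Real.exp 1 * ((k:ℝ)+1) * 8^(k+1)
          ≤ Real.exp 1 * (2*(k:ℝ)) * (8^k * 8) := by
            rw [pow_succ]
            exact mul_le_mul_of_nonneg_right
              (mul_le_mul_of_nonneg_left hkk hepos.le) (by positivity)
        _ = (Real.exp 1 * (k:ℝ) * 8^k) * 16 := by ring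
        _ ≤ Real.exp (3*(k:ℝ)) * Real.exp 1 ^ 3 := by nlinarith
        _ = Real.exp (3*((k:ℝ)+1)) := hexp3.symm

lemma main_bound (n k : ℕ) (hn : 1 ≤ n) (hk : k ≤ n) {s : ℝ}
    (hs0 : 0 ≤ s) (hs1 : s ≤ 1) :
    |iteratedDeriv k expNegInvGlue s| ≤ (n:ℝ)^(3*n) := by
  have hn1 : (1:ℝ) ≤ (n:ℝ)^(3*n) := one_le_pow₀ (by exact_mod_cast hn)
  rcases eq_or_lt_of_le hs0 with h0 | h0
  · rw [iteratedDeriv_eng, ← h0]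
    simp
  · have hxpos : 0 < s⁻¹ := inv_pos.2 h0
    have hx1 : (1:ℝ) ≤ s⁻¹ := by rw [← one_div]; exact one_le_one_div h0 hs1
    have hval : |iteratedDeriv k expNegInvGlue s| = |(Qp k).eval s⁻¹| * Real.exp (-s⁻¹) := by
      rw [iteratedDeriv_eng]
      simp only [expNegInvGlue, if_neg (not_le.2 h0)]
      rw [abs_mul, abs_of_pos (Real.exp_pos _)]
    match k, hk with
    | 0, hk =>
      rw [hval]
      simp only [Qp, eval_one, abs_one, one_mul]
      have h1 : Real.exp (-s⁻¹) ≤ 1 := Real.exp_le_one_iff.2 (by linarith)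
      linarith
    | 1, hk =>
      have hQ1 : Qp 1 = X^2 := by
        show X ^ 2 * (Qp 0 - derivative (Qp 0)) = X^2
        show X ^ 2 * ((1:ℝ[X]) - derivative (1:ℝ[X])) = X^2
        simp
      rw [hval, hQ1]
      simp only [eval_pow, eval_X]
      rw [abs_of_nonneg (by positivity : (0:ℝ) ≤ s⁻¹^2)]
      have h2 := pow_mul_exp_le hxpos (show 1 ≤ 2 by norm_num)
      have he : (2.7182818283:ℝ) < Real.exp 1 := Real.exp_one_gt_d9
      have e2 : Real.exp (-(2:ℝ)) * Real.exp 1 ^ 2 = 1 := by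
        rw [show Real.exp 1^2 = Real.exp 2 from by rw [← Real.exp_nat_mul]; norm_num,
          ← Real.exp_add]
        norm_num
      have hb : ((2:ℕ):ℝ)^2 * Real.exp (-((2:ℕ):ℝ)) ≤ 1 := by
        push_cast
        nlinarith [Real.exp_pos (-(2:ℝ))]
      linarith [h2.trans hb]
    | (k+2), hk =>
      have hpow := pow_mul_exp_le hxpos (show 1 ≤ 2*(k+2) by omega)
      push_cast at hpow
      have heval := eval_Qp_le (k+2) hx1
      have hsc := Sc_le (k+2)
      have hfac := factorial_le (k+2) (by omega)
      push_cast at hfac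
      have h8 := key8 (k+2) (by omega)
      push_cast at h8
      have h8' : Real.exp 1 * ((k:ℝ)+2) * 2^(3*(k+2)) ≤ Real.exp (3*((k:ℝ)+2)) := by
        rw [show (2:ℝ)^(3*(k+2)) = 8^(k+2) from by rw [pow_mul]; norm_num]
        exact h8
      have E3 : Real.exp (-((k:ℝ)+2)) * Real.exp (-(2*((k:ℝ)+2)))
          = Real.exp (-(3*((k:ℝ)+2))) := by
        rw [← Real.exp_add]; ring_nf
      have hkn : ((k:ℝ)+2) ≤ (n:ℝ) := by exact_mod_cast hk
      calc |iteratedDeriv (k+2) expNegInvGlue s|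
          = |(Qp (k+2)).eval s⁻¹| * Real.exp (-s⁻¹) := hval
        _ ≤ (Sc (k+2) * (s⁻¹)^(2*(k+2))) * Real.exp (-s⁻¹) :=
            mul_le_mul_of_nonneg_right heval (Real.exp_pos _).le
        _ = Sc (k+2) * ((s⁻¹)^(2*(k+2)) * Real.exp (-s⁻¹)) := by ring
        _ ≤ Sc (k+2) * ((2*((k:ℝ)+2))^(2*(k+2)) * Real.exp (-(2*((k:ℝ)+2)))) :=
            mul_le_mul_of_nonneg_left hpow (Sc_nonneg _)
        _ ≤ (2^(k+2) * (Nat.factorial (k+2):ℝ))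
              * ((2*((k:ℝ)+2))^(2*(k+2)) * Real.exp (-(2*((k:ℝ)+2)))) :=
            mul_le_mul_of_nonneg_right hsc (by positivity)
        _ ≤ (2^(k+2) * (Real.exp 1 * ((k:ℝ)+2)^(k+2+1) * Real.exp (-((k:ℝ)+2))))
              * ((2*((k:ℝ)+2))^(2*(k+2)) * Real.exp (-(2*((k:ℝ)+2)))) := by
            have := mul_le_mul_of_nonneg_left hfac (by positivity : (0:ℝ) ≤ 2^(k+2))
            exact mul_le_mul_of_nonneg_right this (by positivity)
        _ = (2^(k+2) * (Real.exp 1 * ((k:ℝ)+2)^(k+2+1) * Real.exp (-((k:ℝ)+2))))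
              * ((2^(2*(k+2)) * ((k:ℝ)+2)^(2*(k+2))) * Real.exp (-(2*((k:ℝ)+2)))) := by
            rw [mul_pow]
        _ = (Real.exp 1 * ((k:ℝ)+2) * 2^(3*(k+2)))
              * (((k:ℝ)+2)^(3*(k+2))
                * (Real.exp (-((k:ℝ)+2)) * Real.exp (-(2*((k:ℝ)+2))))) := by
            ring
        _ = (Real.exp 1 * ((k:ℝ)+2) * 2^(3*(k+2)))
              * (((k:ℝ)+2)^(3*(k+2)) * Real.exp (-(3*((k:ℝ)+2)))) := by rw [E3]
        _ ≤ Real.exp (3*((k:ℝ)+2))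
              * (((k:ℝ)+2)^(3*(k+2)) * Real.exp (-(3*((k:ℝ)+2)))) :=
            mul_le_mul_of_nonneg_right h8' (by positivity)
        _ = ((k:ℝ)+2)^(3*(k+2))
              * (Real.exp (3*((k:ℝ)+2)) * Real.exp (-(3*((k:ℝ)+2)))) := by ring
        _ = ((k:ℝ)+2)^(3*(k+2)) := by rw [← Real.exp_add]; simp
        _ ≤ (n:ℝ)^(3*(k+2)) := pow_le_pow_left₀ (by positivity) hkn _
        _ ≤ (n:ℝ)^(3*n) := pow_le_pow_right₀ (by exact_mod_cast hn) (by omega)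

lemma theta_eq : theta = expNegInvGlue := by
  funext x
  rw [theta, expNegInvGlue]
  rcases lt_or_ge 0 x with h | h
  · rw [if_pos h, if_neg (not_le.2 h), neg_div, one_div]
  · rw [if_neg (not_lt.2 h), if_pos h]

/-- The function `θ` is `C^∞`, and for every real `μ ≥ 1` and every `n ≥ 1`,
`sup { |(θ^μ)⁽ᵏ⁾(t)| : t ∈ [0,1], k ≤ n } ≤ n^{3n}`, where
`θ^μ(t) = θ(t)^μ`. -/
theorem theta_power_derivative_bounds :
    ContDiff ℝ (⊤ : ℕ∞) theta ∧
    ∀ μ : ℝ, 1 ≤ μ → ∀ n : ℕ, 1 ≤ n → ∀ k : ℕ, k ≤ n → ∀ t ∈ Icc (0:ℝ) 1,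
      |iteratedDeriv k (fun x : ℝ => theta x ^ μ) t| ≤ (n : ℝ) ^ (3 * n) := by
  constructor
  · rw [theta_eq]; exact expNegInvGlue.contDiff
  · intro μ hμ n hn k hk t ht
    have hμ0 : (0:ℝ) < μ := by linarith
    have hfun : (fun x : ℝ => theta x ^ μ) = fun x => expNegInvGlue (μ⁻¹ * x) := by
      funext x
      rcases lt_or_ge 0 x with hx | hx
      · have hx' : 0 < μ⁻¹ * x := by positivity
        rw [theta_eq, expNegInvGlue, expNegInvGlue, if_neg (not_le.2 hx),
          if_neg (not_le.2 hx'),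
          Real.rpow_def_of_pos (Real.exp_pos _), Real.log_exp]
        congr 1
        rw [mul_inv, inv_inv]
        field_simp
      · have h1 : theta x = 0 := by rw [theta, if_neg (not_lt.2 hx)]
        have h2 : μ⁻¹ * x ≤ 0 := mul_nonpos_of_nonneg_of_nonpos (by positivity) hx
        rw [h1, expNegInvGlue.zero_of_nonpos h2, Real.zero_rpow (by linarith)]
    rw [hfun, iteratedDeriv_comp_const_mul expNegInvGlue.contDiff μ⁻¹, abs_mul]
    have hinv1 : μ⁻¹ ≤ 1 := by
      rw [inv_le_one_iff₀]; right; linarith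
    have hinv0 : 0 ≤ μ⁻¹ := by positivity
    have h1 : |μ⁻¹ ^ k| ≤ 1 := by
      rw [abs_of_nonneg (by positivity)]
      exact pow_le_one₀ hinv0 hinv1
    have h2 : |iteratedDeriv k expNegInvGlue (μ⁻¹ * t)| ≤ (n:ℝ)^(3*n) :=
      main_bound n k hn hk (mul_nonneg (by positivity) ht.1) (by nlinarith [ht.1, ht.2])
    calc |μ⁻¹ ^ k| * |iteratedDeriv k expNegInvGlue (μ⁻¹ * t)|
        ≤ 1 * ((n:ℝ)^(3*n)) := by
          exact mul_le_mul h1 h2 (abs_nonneg _) one_pos.le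
      _ = (n:ℝ)^(3*n) := one_mul _
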